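/- Let d ≥ 1 and let G be a connected locally finite 2d-regular simple graph on vertex set V. If G is bipartite, then there exist permutations σ₁, …, σ_d of V such that for every vertex x the 2d vertices σ₁(x), σ₁⁻¹(x), …, σ_d(x), σ_d⁻¹(x) are pairwise distinct and their set is exactly the neighborhood of x in G. If G is not bipartite, then the same conclusion holds for the canonical double cover G ⊗ K₂ on the vertex set V × Bool. (Equivalently: either G, if it is bipartite, or G ⊗ K₂, otherwise, is isomorphic to a Schreier graph of the free group F_d.) -/

import Mathlib

/-- The canonical double cover `G ⊗ K₂` of a simple graph `G`: vertices are `V × Bool`,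
and `(v, b)` is adjacent to `(w, c)` iff `v` is adjacent to `w` in `G` and `b ≠ c`. -/
def doubleCover {V : Type*} (G : SimpleGraph V) : SimpleGraph (V × Bool) where
  Adj x y := G.Adj x.1 y.1 ∧ x.2 ≠ y.2
  symm := ⟨fun _ _ h => ⟨G.symm.symm _ _ h.1, Ne.symm h.2⟩⟩
  loopless := ⟨fun _ h => h.2 rfl⟩

/-- A graph `H` carries permutations `σ₁, …, σ_d` of its vertex set such that for every vertex
`x` the `2d` vertices `σ₁ x, σ₁⁻¹ x, …, σ_d x, σ_d⁻¹ x` are pairwise distinct and form exactly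
the neighborhood of `x`.  (This encodes being a Schreier graph of the free group `F_d`.) -/
def FreeGroupStructure {W : Type*} (H : SimpleGraph W) (d : ℕ) : Prop :=
  ∃ σ : Fin d → Equiv.Perm W,
    ∀ x : W,
      Function.Injective
        (Sum.elim (fun i : Fin d => σ i x) (fun i : Fin d => (σ i)⁻¹ x)) ∧
      Set.range (Sum.elim (fun i : Fin d => σ i x) (fun i : Fin d => (σ i)⁻¹ x)) =
        H.neighborSet x

open Set Function

theorem csb_rel {α : Type*} {β : Type*} {f : α → β} {g : β → α}
    (hf : Function.Injective f) (hg : Function.Injective g) :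
    ∃ h : α → β, Function.Bijective h ∧ ∀ a, h a = f a ∨ g (h a) = a := by
  classical
  cases' isEmpty_or_nonempty β with hβ hβ
  · have hα : IsEmpty α := Function.isEmpty f
    exact ⟨f, ⟨hf, fun b => (hβ.false b).elim⟩, fun a => (hα.false a).elim⟩
  set F : Set α →o Set α :=
    { toFun := fun s => (g '' (f '' s)ᶜ)ᶜ
      monotone' := fun s t hst =>
        compl_subset_compl.mpr <| image_mono <| compl_subset_compl.mpr <| image_mono hst }
  set s : Set α := F.lfp
  have hs : (g '' (f '' s)ᶜ)ᶜ = s := F.map_lfp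
  have hns : g '' (f '' s)ᶜ = sᶜ := compl_injective (by simp [hs])
  set g' := invFun g
  have g'g : LeftInverse g' g := leftInverse_invFun hg
  have hg'ns : g' '' sᶜ = (f '' s)ᶜ := by rw [← hns, g'g.image_image]
  set h : α → β := s.piecewise f g'
  have hsurj : Surjective h := by rw [← range_eq_univ, Set.range_piecewise, hg'ns, union_compl_self]
  have hinj : Injective h := by
    refine (injective_piecewise_iff _).2 ⟨hf.injOn, ?_, ?_⟩
    · intro x hx y hy hxy
      obtain ⟨x', _, rfl⟩ : x ∈ g '' (f '' s)ᶜ := by rwa [hns]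
      obtain ⟨y', _, rfl⟩ : y ∈ g '' (f '' s)ᶜ := by rwa [hns]
      rw [g'g _, g'g _] at hxy
      rw [hxy]
    · intro x hx y hy hxy
      obtain ⟨y', hy', rfl⟩ : y ∈ g '' (f '' s)ᶜ := by rwa [hns]
      rw [g'g _] at hxy
      exact hy' ⟨x, hx, hxy⟩
  refine ⟨h, ⟨hinj, hsurj⟩, fun a => ?_⟩
  by_cases ha : a ∈ s
  · exact Or.inl (Set.piecewise_eq_of_mem _ _ _ ha)
  · obtain ⟨b, _, rfl⟩ : a ∈ g '' (f '' s)ᶜ := by rwa [hns]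
    right
    have : h (g b) = g' (g b) := Set.piecewise_eq_of_notMem _ _ _ ha
    rw [this, g'g b]

open SimpleGraph in
lemma hall_cond {W : Type*} [DecidableEq W] (H : SimpleGraph W) [H.LocallyFinite]
    {k : ℕ} (hk : 1 ≤ k) (hreg : H.IsRegularOfDegree k) (S : Finset W) :
    S.card ≤ (S.biUnion (fun w => H.neighborFinset w)).card := by
  classical
  set T := S.biUnion (fun w => H.neighborFinset w) with hT
  have h1 : (S.biUnion fun a => (H.neighborFinset a).image fun b => (a, b)).card = k * S.card := by
    rw [Finset.card_biUnion ?_]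
    · rw [Finset.sum_congr rfl (fun a _ => ?_), Finset.sum_const, smul_eq_mul, mul_comm]
      rw [Finset.card_image_of_injective _ (fun x y hxy => by injection hxy)]
      exact hreg a
    · intro x _ y _ hxy
      simp only [Finset.disjoint_left, Finset.mem_image]
      rintro z ⟨b, _, rfl⟩ ⟨b', _, h'⟩
      injection h' with e1 e2
      exact hxy e1.symm
  have h2 : (T.biUnion fun b => (H.neighborFinset b).image fun a => (a, b)).card = k * T.card := by
    rw [Finset.card_biUnion ?_]
    · rw [Finset.sum_congr rfl (fun a _ => ?_), Finset.sum_const, smul_eq_mul, mul_comm]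
      rw [Finset.card_image_of_injective _ (fun x y hxy => by injection hxy)]
      exact hreg a
    · intro x _ y _ hxy
      simp only [Finset.disjoint_left, Finset.mem_image]
      rintro z ⟨b, _, rfl⟩ ⟨b', _, h'⟩
      injection h' with e1 e2
      exact hxy e2.symm
  have hsub : (S.biUnion fun a => (H.neighborFinset a).image fun b => (a, b)) ⊆
      (T.biUnion fun b => (H.neighborFinset b).image fun a => (a, b)) := by
    intro x hx
    simp only [Finset.mem_biUnion, Finset.mem_image] at hx ⊢
    obtain ⟨a, ha, b, hb, rfl⟩ := hx
    refine ⟨b, Finset.mem_biUnion.2 ⟨a, ha, hb⟩, a, ?_, rfl⟩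
    rw [mem_neighborFinset] at hb ⊢
    exact hb.symm
  have := Finset.card_le_card hsub
  rw [h1, h2] at this
  exact Nat.le_of_mul_le_mul_left this hk

open SimpleGraph in
lemma exists_matching {W : Type*} (H : SimpleGraph W) [H.LocallyFinite]
    {k : ℕ} (hk : 1 ≤ k) (hreg : H.IsRegularOfDegree k)
    (c : W → Bool) (hc : ∀ {x y : W}, H.Adj x y → c x ≠ c y) :
    ∃ p : W → W, (∀ w, p (p w) = w) ∧ (∀ w, H.Adj w (p w)) := by
  classical
  -- Hall on each side
  have side : ∀ b : Bool, ∃ f : {w : W // c w = b} → {w : W // c w = !b},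
      Function.Injective f ∧ ∀ a, H.Adj a.1 (f a).1 := by
    intro b
    have hall : ∀ S : Finset {w : W // c w = b},
        S.card ≤ (S.biUnion fun a => H.neighborFinset a.1).card := by
      intro S
      have : S.biUnion (fun a => H.neighborFinset a.1)
          = (S.image Subtype.val).biUnion (fun w => H.neighborFinset w) := by
        ext x; simp
      rw [this, ← Finset.card_image_of_injective S Subtype.val_injective]
      exact hall_cond H hk hreg _
    obtain ⟨f, hfinj, hf⟩ :=
      (Finset.all_card_le_biUnion_card_iff_exists_injective
        (fun a : {w : W // c w = b} => H.neighborFinset a.1)).1 hall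
    have hadj : ∀ a, H.Adj a.1 (f a) := fun a => (mem_neighborFinset ..).1 (hf a)
    refine ⟨fun a => ⟨f a, ?_⟩, fun x y hxy => hfinj (congrArg Subtype.val hxy), fun a => hadj a⟩
    have := hc (hadj a)
    rw [a.2] at this
    cases b <;> cases hcb : c (f a) <;> simp_all
  obtain ⟨f, hfinj, hfadj⟩ := side true
  obtain ⟨g, hginj, hgadj⟩ := side false
  have e : ∀ x : {w : W // c w = !true}, c x.1 = false := fun x => by simpa using x.2
  -- adjust types: {w // c w = !true} = {w // c w = false}
  let f' : {w : W // c w = true} → {w : W // c w = false} := fun a => ⟨(f a).1, e (f a)⟩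
  have e' : ∀ x : {w : W // c w = !false}, c x.1 = true := fun x => by simpa using x.2
  let g' : {w : W // c w = false} → {w : W // c w = true} := fun a => ⟨(g a).1, e' (g a)⟩
  have hf'inj : Function.Injective f' := by
    intro x y h
    exact hfinj (Subtype.ext (congrArg Subtype.val h))
  have hg'inj : Function.Injective g' := by
    intro x y h
    exact hginj (Subtype.ext (congrArg Subtype.val h))
  obtain ⟨h, hbij, hor⟩ := csb_rel hf'inj hg'inj
  have hadj : ∀ a, H.Adj a.1 (h a).1 := by
    intro a
    rcases hor a with h1 | h2
    · rw [h1]; exact hfadj a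
    · have h3 : ((g (h a)).1 : W) = a.1 := congrArg Subtype.val h2
      have := hgadj (h a)
      rw [h3] at this
      exact this.symm
  let E := Equiv.ofBijective h hbij
  refine ⟨fun w => if hw : c w = true then (E ⟨w, hw⟩).1
    else (E.symm ⟨w, by simpa using hw⟩).1, ?_, ?_⟩
  · intro w
    beta_reduce
    by_cases hw : c w = true
    · rw [dif_pos hw]
      have h2 : c (E ⟨w, hw⟩).1 = false := (E ⟨w, hw⟩).2
      rw [dif_neg (by simp [h2])]
      have : (⟨(E ⟨w, hw⟩).1, h2⟩ : {w : W // c w = false}) = E ⟨w, hw⟩ := rfl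
      rw [show (⟨(E ⟨w, hw⟩).1, by simpa using h2⟩ : {w : W // c w = false}) = E ⟨w, hw⟩ from rfl,
        Equiv.symm_apply_apply]
    · rw [dif_neg hw]
      have h2 : c (E.symm ⟨w, by simpa using hw⟩).1 = true := (E.symm ⟨w, by simpa using hw⟩).2
      rw [dif_pos h2]
      rw [show (⟨(E.symm ⟨w, by simpa using hw⟩).1, h2⟩ : {w : W // c w = true})
          = E.symm ⟨w, by simpa using hw⟩ from rfl, Equiv.apply_symm_apply]
  · intro w
    beta_reduce
    by_cases hw : c w = true
    · rw [dif_pos hw]; exact hadj ⟨w, hw⟩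
    · rw [dif_neg hw]
      have := hadj (E.symm ⟨w, by simpa using hw⟩)
      rw [show h (E.symm ⟨w, by simpa using hw⟩)
          = E (E.symm ⟨w, by simpa using hw⟩) from rfl, Equiv.apply_symm_apply] at this
      exact this.symm


open SimpleGraph in
lemma exists_decomp {W : Type*} (c : W → Bool) :
    ∀ (k : ℕ) (H : SimpleGraph W), H.LocallyFinite →
      (∀ w : W, (H.neighborSet w).ncard = k) → (∀ {x y : W}, H.Adj x y → c x ≠ c y) →
      ∃ p : Fin k → W → W,
        (∀ i w, p i (p i w) = w) ∧ (∀ i w, H.Adj w (p i w)) ∧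
        (∀ w (i j : Fin k), i ≠ j → p i w ≠ p j w) := by
  intro k
  induction k with
  | zero =>
    intro H _ _ _
    exact ⟨fun i => i.elim0, fun i => i.elim0, fun i => i.elim0, fun w i => i.elim0⟩
  | succ k ih =>
    intro H hlf hreg hc
    classical
    haveI := hlf
    have hdeg : H.IsRegularOfDegree (k + 1) := by
      intro w
      rw [← hreg w, SimpleGraph.degree, neighborFinset_def, Set.ncard_eq_toFinset_card']
    obtain ⟨p₀, hp₀inv, hp₀adj⟩ := exists_matching H (Nat.succ_le_succ (Nat.zero_le k)) hdeg c hc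
    -- remove the matching
    set H' : SimpleGraph W :=
      { Adj := fun x y => H.Adj x y ∧ y ≠ p₀ x ∧ x ≠ p₀ y
        symm := ⟨fun x y h => ⟨h.1.symm, h.2.2, h.2.1⟩⟩
        loopless := ⟨fun x h => H.loopless.irrefl x h.1⟩ } with hH'
    have hadj' : ∀ x y, H'.Adj x y ↔ H.Adj x y ∧ y ≠ p₀ x := by
      intro x y
      constructor
      · rintro ⟨h1, h2, h3⟩; exact ⟨h1, h2⟩
      · rintro ⟨h1, h2⟩
        refine ⟨h1, h2, fun hxy => h2 ?_⟩
        rw [hxy, hp₀inv]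
    have hnset : ∀ w, H'.neighborSet w = H.neighborSet w \ {p₀ w} := by
      intro w
      ext y
      simp only [mem_neighborSet, Set.mem_diff, Set.mem_singleton_iff]
      exact hadj' w y
    have hlf' : H'.LocallyFinite := by
      intro w
      apply Set.Finite.fintype
      rw [hnset w]
      exact Set.Finite.diff (H.neighborSet w).toFinite
    have hreg' : ∀ w : W, (H'.neighborSet w).ncard = k := by
      intro w
      have hmem : p₀ w ∈ H.neighborSet w := by rw [mem_neighborSet]; exact hp₀adj w
      rw [hnset w, Set.ncard_diff_singleton_of_mem hmem, hreg w]
      omega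
    have hc' : ∀ {x y : W}, H'.Adj x y → c x ≠ c y := fun h => hc h.1
    obtain ⟨p', hinv', hadj'2, hdist'⟩ := ih H' hlf' hreg' hc'
    refine ⟨fun i => if h : i = 0 then p₀ else p' (i.pred h), ?_, ?_, ?_⟩
    · intro i w
      by_cases h : i = 0
      · simp only [dif_pos h]; exact hp₀inv w
      · simp only [dif_neg h]; exact hinv' _ w
    · intro i w
      by_cases h : i = 0
      · simp only [dif_pos h]; exact hp₀adj w
      · simp only [dif_neg h]; exact (hadj'2 _ w).1
    · intro w i j hij
      by_cases h : i = 0 <;> by_cases h' : j = 0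
      · exact absurd (h.trans h'.symm) hij
      · simp only [dif_pos h, dif_neg h']
        intro he
        exact ((hadj' w (p' (j.pred h') w)).1 (hadj'2 _ w)).2 he.symm
      · simp only [dif_neg h, dif_pos h']
        intro he
        exact ((hadj' w (p' (i.pred h) w)).1 (hadj'2 _ w)).2 he
      · simp only [dif_neg h, dif_neg h']
        refine hdist' w _ _ (fun he => hij ?_)
        rwa [Fin.pred_inj] at he

open SimpleGraph in
lemma key {W : Type*} (H : SimpleGraph W) (d : ℕ) (hd : 1 ≤ d)
    (hn : ∀ w : W, (H.neighborSet w).ncard = 2 * d) (c : W → Bool)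
    (hc : ∀ {x y : W}, H.Adj x y → c x ≠ c y) :
    FreeGroupStructure H d := by
  classical
  have hlf : H.LocallyFinite := by
    intro w
    apply Set.Finite.fintype
    rcases Set.finite_or_infinite (H.neighborSet w) with h | h
    · exact h
    · exact absurd (hn w) (by rw [h.ncard]; omega)
  obtain ⟨p, hinv, hadj, hdist⟩ := exists_decomp c (2 * d) H hlf hn hc
  -- encode Fin d × Bool into Fin (2 * d)
  let e : Fin d → Bool → Fin (2 * d) :=
    fun i b => ⟨2 * i.1 + (if b then 1 else 0), by have := i.2; cases b <;> simp <;> omega⟩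
  have einj : ∀ i b j b', e i b = e j b' → i = j ∧ b = b' := by
    intro i b j b' h
    have hval := congrArg Fin.val h
    simp only [e] at hval
    cases b <;> cases b' <;> simp at hval <;>
      first
        | exact ⟨Fin.ext (by omega), rfl⟩
        | omega
  let q : Fin d → Bool → W → W := fun i b => p (e i b)
  have qadj : ∀ i b w, H.Adj w (q i b w) := fun i b w => hadj (e i b) w
  have qinv : ∀ i b w, q i b (q i b w) = w := fun i b w => hinv (e i b) w
  have qdist : ∀ w i b j b', (i, b) ≠ (j, b') → q i b w ≠ q j b' w := by
    intro w i b j b' hne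
    refine hdist w (e i b) (e j b') (fun h => hne ?_)
    obtain ⟨h1, h2⟩ := einj i b j b' h
    rw [h1, h2]
  -- the color of q i b w is opposite to that of w
  have qcol : ∀ i b w, c (q i b w) = !(c w) := by
    intro i b w
    cases hw : c w <;> cases hq : c (q i b w)
    · exact absurd (hw.trans hq.symm) (hc (qadj i b w))
    · simp [hq, hw]
    · simp [hq, hw]
    · exact absurd (hw.trans hq.symm) (hc (qadj i b w))
  let σ : Fin d → Equiv.Perm W := fun i =>
    { toFun := fun w => if c w then q i true w else q i false w
      invFun := fun w => if c w then q i false w else q i true w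
      left_inv := by
        intro w
        cases hw : c w with
        | true =>
          simp only [hw, if_true]
          rw [if_neg (by rw [qcol i true w, hw]; simp), qinv]
        | false =>
          simp only [hw, if_false, Bool.false_eq_true]
          rw [if_pos (by rw [qcol i false w, hw]; simp), qinv]
      right_inv := by
        intro w
        cases hw : c w with
        | true =>
          simp only [hw, if_true]
          rw [if_neg (by rw [qcol i false w, hw]; simp), qinv]
        | false =>
          simp only [hw, if_false, Bool.false_eq_true]
          rw [if_pos (by rw [qcol i true w, hw]; simp), qinv] }
  have hσ : ∀ i x, σ i x = if c x then q i true x else q i false x := fun i x => rfl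
  have hσinv : ∀ i x, (σ i)⁻¹ x = if c x then q i false x else q i true x := fun i x => rfl
  refine ⟨σ, fun x => ?_⟩
  set F : Fin d ⊕ Fin d → W :=
    Sum.elim (fun i : Fin d => σ i x) (fun i : Fin d => (σ i)⁻¹ x) with hF
  have hFval : ∀ s : Fin d ⊕ Fin d, F s =
      Sum.elim (fun i => q i (c x) x) (fun i => q i (!(c x)) x) s := by
    intro s
    cases s with
    | inl i => cases hx : c x <;> simp [hF, hσ, hx]
    | inr i => cases hx : c x <;> simp [hF, hσinv, hx]
  have hbne : c x ≠ !(c x) := by cases c x <;> simp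
  have hFinj : Function.Injective F := by
    intro s s' h
    rw [hFval s, hFval s'] at h
    cases s with
    | inl i =>
      cases s' with
      | inl j =>
        simp only [Sum.elim_inl] at h
        have hij : i = j := by
          by_contra hne
          exact qdist x i (c x) j (c x) (fun hp => hne (congrArg Prod.fst hp)) h
        exact congrArg Sum.inl hij
      | inr j =>
        simp only [Sum.elim_inl, Sum.elim_inr] at h
        exact absurd h (qdist x i (c x) j (!(c x)) (fun hp => hbne (congrArg Prod.snd hp)))
    | inr i =>
      cases s' with
      | inl j =>
        simp only [Sum.elim_inl, Sum.elim_inr] at h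
        exact absurd h.symm (qdist x j (c x) i (!(c x)) (fun hp => hbne (congrArg Prod.snd hp)))
      | inr j =>
        simp only [Sum.elim_inr] at h
        have hij : i = j := by
          by_contra hne
          exact qdist x i (!(c x)) j (!(c x)) (fun hp => hne (congrArg Prod.fst hp)) h
        exact congrArg Sum.inr hij
  refine ⟨hFinj, ?_⟩
  have hsub : Set.range F ⊆ H.neighborSet x := by
    rintro y ⟨s, rfl⟩
    rw [mem_neighborSet, hFval s]
    cases s with
    | inl i => exact qadj i (c x) x
    | inr i => exact qadj i (!(c x)) x
  have hcard : (Set.range F).ncard = 2 * d := by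
    rw [← Nat.card_coe_set_eq, Nat.card_range_of_injective hFinj]
    simp only [Nat.card_eq_fintype_card, Fintype.card_sum, Fintype.card_fin]
    omega
  exact Set.eq_of_subset_of_ncard_le hsub (by rw [hn x, hcard]) ((H.neighborSet x).toFinite)

/-- Let `G` be a connected locally finite `2d`-regular simple graph,
`d ≥ 1`.  If `G` is bipartite then `G` carries such a family of `d` permutations; otherwise
its canonical double cover does.  (Equivalently: `G`, if bipartite, or `G ⊗ K₂`, otherwise,
is isomorphic to a Schreier graph of the free group `F_d`.) -/
theorem bipartite_or_doubleCover_freeGroup {V : Type*} (G : SimpleGraph V)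
    [G.LocallyFinite] (d : ℕ) (hd : 1 ≤ d) (hconn : G.Connected)
    (hreg : G.IsRegularOfDegree (2 * d)) :
    (G.Colorable 2 → FreeGroupStructure G d) ∧
    (¬ G.Colorable 2 → FreeGroupStructure (doubleCover G) d) := by
  classical
  have hn : ∀ w : V, (G.neighborSet w).ncard = 2 * d := by
    intro w
    rw [Set.ncard_eq_toFinset_card', ← SimpleGraph.neighborFinset_def]
    exact hreg w
  constructor
  · intro hcol
    obtain ⟨C⟩ := hcol
    refine key G d hd hn (fun w => decide (C w = 0)) ?_
    intro x y h
    have htwo : ∀ a b : Fin 2, decide (a = 0) = decide (b = 0) → a = b := by decide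
    exact fun hxy => C.valid h (htwo _ _ hxy)
  · intro _
    refine key (doubleCover G) d hd ?_ (fun x => x.2) (fun h => h.2)
    rintro ⟨v, b⟩
    have himg : (doubleCover G).neighborSet (v, b) = (fun w => (w, !b)) '' G.neighborSet v := by
      ext ⟨w, b'⟩
      simp only [SimpleGraph.mem_neighborSet, Set.mem_image]
      constructor
      · rintro ⟨h1, h2⟩
        exact ⟨w, h1, by cases b <;> cases b' <;> simp_all⟩
      · rintro ⟨u, hu, he⟩
        injection he with e1 e2
        subst e1
        subst e2
        exact ⟨hu, by cases b <;> simp⟩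
    rw [himg, Set.ncard_image_of_injective _ (fun a a' h => by injection h), hn v]
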